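/- Let q ≡ 1 (mod 6) be a prime power and χ a primitive cubic character of genus g over 𝔽_q[T] which is even. Then for every integer A with 0 ≤ A ≤ g and every s ∈ ℂ with q^s ≠ 1, q, one has 𝓛(q^{−s}, χ) = (1 − q^{1−s})^{−1}·[ ∑_{f∈𝓜_{≤A+1}} χ(f)/|f|^s − q^{1−s} ∑_{f∈𝓜_{≤A}} χ(f)/|f|^s ] + (1 − q^s)^{−1} · ω(χ)·q^{−(s−1/2)g} · (ζ_q(2−s)/ζ_q(s+1)) · [ ∑_{f∈𝓜_{≤ g−A}} χ̄(f)/|f|^{1−s} − q^s ∑_{f∈𝓜_{≤ g−A−1}} χ̄(f)/|f|^{1−s} ]. -/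

import Mathlib

open Polynomial Finset Filter
open scoped Classical

noncomputable section

/-- The monic polynomial `X^n + ∑_{i<n} c i · X^i`; as `c` ranges over `Fin n → Fq`
this parametrizes the monic polynomials of degree `n` over `Fq`. -/
def monicOf {Fq : Type} [Field Fq] (n : ℕ) (c : Fin n → Fq) : Polynomial Fq :=
  X ^ n + ∑ i : Fin n, C (c i) * X ^ (i : ℕ)

/-- Sum of `φ` over the monic polynomials of degree `n` in `Fq[T]`. -/
def sumMonic {Fq : Type} [Field Fq] [Fintype Fq] (n : ℕ) (φ : Polynomial Fq → ℂ) : ℂ :=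
  ∑ c : Fin n → Fq, φ (monicOf n c)

/-- Sum of `φ` over the squarefree monic polynomials of degree `n` in `Fq[T]`. -/
def sumSqfree {Fq : Type} [Field Fq] [Fintype Fq] (n : ℕ) (φ : Polynomial Fq → ℂ) : ℂ :=
  ∑ c : Fin n → Fq, if Squarefree (monicOf n c) then φ (monicOf n c) else 0

/-- `L(s,χ) = ∑_{F monic} χ(F)|F|^{-s}`, grouped by degree.  For the characters in this
paper the coefficient sums vanish in large degree, so this is a finite sum giving the
analytic continuation of the Dirichlet series. -/
def Lval {Fq : Type} [Field Fq] [Fintype Fq] (q : ℕ) (s : ℝ) (χ : Polynomial Fq → ℂ) : ℂ :=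
  ∑' n : ℕ, sumMonic n χ * ((q : ℝ) ^ (-s * (n : ℝ)) : ℝ)

/-- `𝓛(u,χ) = ∑_{F monic} χ(F) u^{deg F}`, grouped by degree. -/
def Lu {Fq : Type} [Field Fq] [Fintype Fq] (u : ℂ) (χ : Polynomial Fq → ℂ) : ℂ :=
  ∑' n : ℕ, sumMonic n χ * u ^ n

/-- `chi` is the family of cubic residue symbols `chi F = χ_F` on `Fq[T]` determined by the
isomorphism `Ω` from the cube roots of unity of `Fq^*` to `μ₃ ⊂ ℂ^*`. -/
structure IsCubicSymbol (q : ℕ) {Fq : Type} [Field Fq] [Fintype Fq]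
    (Ω : Fq → ℂ) (chi : Polynomial Fq → Polynomial Fq → ℂ) : Prop where
  omega_mul : ∀ a b : Fq, a ^ 3 = 1 → b ^ 3 = 1 → Ω (a * b) = Ω a * Ω b
  omega_cube : ∀ a : Fq, a ^ 3 = 1 → (Ω a) ^ 3 = 1
  omega_inj : ∀ a b : Fq, a ^ 3 = 1 → b ^ 3 = 1 → Ω a = Ω b → a = b
  omega_surj : ∀ z : ℂ, z ^ 3 = 1 → ∃ a : Fq, a ^ 3 = 1 ∧ Ω a = z
  chi_one : ∀ a : Polynomial Fq, chi 1 a = 1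
  chi_mul_left : ∀ F G a : Polynomial Fq, F.Monic → G.Monic →
    chi (F * G) a = chi F a * chi G a
  chi_prime_dvd : ∀ P a : Polynomial Fq, P.Monic → Irreducible P → P ∣ a → chi P a = 0
  chi_prime_not_dvd : ∀ P a : Polynomial Fq, P.Monic → Irreducible P → ¬ P ∣ a →
    ∃ c : Fq, c ^ 3 = 1 ∧ Ω c = chi P a ∧ P ∣ (a ^ ((q ^ P.natDegree - 1) / 3) - C c)

/-- The monic irreducible polynomials over `Fq`. -/
def MonicIrred (Fq : Type) [Field Fq] : Type := {P : Polynomial Fq // P.Monic ∧ Irreducible P}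

/-- `|P| = q^{deg P}` as a real number. -/
def normP {Fq : Type} [Field Fq] (q : ℕ) (P : MonicIrred Fq) : ℝ := (q : ℝ) ^ P.1.natDegree

/-- `C_q = ∏_P (1 - 1/(|P|(|P|+1)))`. -/
def Cq (q : ℕ) (Fq : Type) [Field Fq] : ℝ :=
  ∏' P : MonicIrred Fq, (1 - (normP q P * (normP q P + 1))⁻¹)

/-- `M_q(s) = ζ_q(3s) ∏_P (1 - |P|^{-3s}/(|P|+1))`. -/
def Mq (q : ℕ) (Fq : Type) [Field Fq] (s : ℝ) : ℝ :=
  (1 - (q : ℝ) ^ (1 - 3 * s))⁻¹ *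
    ∏' P : MonicIrred Fq, (1 - (normP q P) ^ (-3 * s) * (normP q P + 1)⁻¹)


/-- `ζ_q(s) = (1 - q^{1-s})⁻¹`, as a function of a complex variable. -/
def zetaq (q : ℕ) (s : ℂ) : ℂ := (1 - (q : ℂ) ^ ((1 : ℂ) - s))⁻¹

private lemma abel_sum (a b : ℕ → ℂ) (hb : ∀ n, b n = ∑ m ∈ Finset.range (n+1), a m)
    (u : ℂ) (B : ℕ) : ∑ n ∈ Finset.range (B+1), a n * u ^ n =
      (1 - u) * ∑ n ∈ Finset.range (B+1), b n * u ^ n + b B * u ^ (B+1) := by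
  induction B with
  | zero => simp [hb]; ring
  | succ B ih =>
      rw [Finset.sum_range_succ (fun n => a n * u ^ n),
          Finset.sum_range_succ (fun n => b n * u ^ n)]
      have h2 : b (B+1) = b B + a (B+1) := by rw [hb, hb, Finset.sum_range_succ]
      rw [ih, h2]; ring

private lemma coeff_ext {g : ℕ} (c d : ℕ → ℂ)
    (h : {w : ℂ | ∑ n ∈ Finset.range (g+1), c n * w ^ n =
        ∑ n ∈ Finset.range (g+1), d n * w ^ n}.Infinite) :
    ∀ n ≤ g, c n = d n := by
  have hpq : (∑ n ∈ Finset.range (g+1), C (c n) * X ^ n : Polynomial ℂ) =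
      ∑ n ∈ Finset.range (g+1), C (d n) * X ^ n := by
    apply Polynomial.eq_of_infinite_eval_eq
    apply h.mono
    intro w hw
    simpa [Polynomial.eval_finset_sum] using hw
  intro n hn
  have h2 := congrArg (fun p => Polynomial.coeff p n) hpq
  simpa [Polynomial.finset_sum_coeff, Polynomial.coeff_C_mul, Polynomial.coeff_X_pow,
    Finset.sum_ite_eq, Finset.mem_range, Nat.lt_succ_iff, hn] using h2

private lemma final_algebra (t u v qc HA TL bA bA1 x : ℂ)
    (hu : u = t⁻¹) (hv : v = t * qc⁻¹) (hq0 : qc ≠ 0) (ht0 : t ≠ 0)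
    (h1u : 1 - u ≠ 0) (h1t : 1 - t ≠ 0) (h1v : 1 - v ≠ 0) (h1y : 1 - qc * u ≠ 0) :
    (1 - u) * (HA + TL) =
      (1 - qc * u)⁻¹ * ((((1-u) * HA + bA * (x*u)) + (bA1 - bA) * (x*u))
          - qc * u * ((1-u) * HA + bA * (x*u)))
      + (1 - t)⁻¹ * ((1-v)⁻¹ / (1-u)⁻¹) *
          ((1-t) * ((1-v) * (bA * x + TL) + v * (bA * x)) + t * (bA * x - v * (bA1 * (x*u)))) := by
  have hut : t * u = 1 := by rw [hu]; exact mul_inv_cancel₀ ht0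
  have hvq : v * qc = t := by rw [hv]; field_simp
  have e2 : ∀ Y : ℂ, (1-t)⁻¹ * ((1-v)⁻¹ / (1-u)⁻¹) * Y = ((1-u) * Y) / ((1-t)*(1-v)) := by
    intro Y
    rw [div_eq_mul_inv ((1-v)⁻¹) ((1-u)⁻¹), inv_inv]
    field_simp
  have e3 : ∀ X : ℂ, (1 - qc * u)⁻¹ * X = X / (1 - qc * u) := fun X => inv_mul_eq_div _ _
  rw [e3, e2, div_add_div _ _ h1y (mul_ne_zero h1t h1v),
    eq_div_iff (mul_ne_zero h1y (mul_ne_zero h1t h1v))]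
  linear_combination (bA * x + u * bA1 * x + (-1) * u * bA * x + (-1) * u * qc * bA * x
      + (-1) * u * v * bA1 * x + (-1) * u * v * qc * bA1 * x + u * v * qc * bA * x
      + u^2 * v * qc * bA1 * x) * hut
    + ((-1) * u * bA1 * x + u * bA * x + u^2 * bA1 * x + (-1) * u^2 * bA * x) * hvq

set_option maxHeartbeats 4000000 in
/-- **Approximate functional equation, even case.** Here `χ` is a primitive cubic character
of modulus (conductor) `m` over `𝔽_q[T]` which is even; its genus is `g = deg m - 2`.
The hypotheses `hpoly`, `hvanish`, `habs`, `hFE` record the facts (from the Weil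
conjectures) that `𝓛_C(u,χ) = 𝓛(u,χ)/(1-u)` is a polynomial of degree `g` satisfying the
functional equation `𝓛_C(u,χ) = ω(χ)(√q u)^g 𝓛_C(1/(qu), χ̄)` with `|ω(χ)| = 1`. -/
theorem approximate_functional_equation_even
    (q : ℕ) (Fq : Type) [Field Fq] [Fintype Fq]
    (hq : IsPrimePow q) (hq6 : q % 6 = 1) (hcard : Fintype.card Fq = q)
    (χ : Polynomial Fq → ℂ) (m : Polynomial Fq) (hm : m.Monic)
    (hmul : ∀ f h : Polynomial Fq, χ (f * h) = χ f * χ h)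
    (hcubic : ∀ f : Polynomial Fq, χ f = 0 ∨ (χ f) ^ 3 = 1)
    (hperiodic : ∀ f h : Polynomial Fq, m ∣ (f - h) → χ f = χ h)
    (hzero : ∀ f : Polynomial Fq, χ f = 0 ↔ ¬ IsCoprime f m)
    (hprimitive : ∀ d : Polynomial Fq, d.Monic → d ∣ m → d ≠ m →
      ¬ (∀ f h : Polynomial Fq, IsCoprime f m → IsCoprime h m → d ∣ (f - h) → χ f = χ h))
    (heven : ∀ c : Fq, c ≠ 0 → χ (C c) = 1)
    (g : ℕ) (hgenus : m.natDegree = g + 2)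
    (ω : ℂ) (habs : ‖ω‖ = 1)
    (hpoly : ∀ n : ℕ, g + 1 < n → sumMonic n χ = 0)
    (hvanish : Lu 1 χ = 0)
    (hFE : ∀ u : ℂ, u ≠ 0 → u ≠ 1 → (q : ℂ) * u ≠ 1 →
      Lu u χ / (1 - u) =
        ω * (((Real.sqrt q : ℝ) : ℂ) * u) ^ g *
          (Lu (1 / ((q : ℂ) * u)) (fun f => (starRingEnd ℂ) (χ f)) /
            (1 - 1 / ((q : ℂ) * u)))) :
    ∀ A : ℕ, A ≤ g → ∀ s : ℂ, (q : ℂ) ^ s ≠ 1 → (q : ℂ) ^ s ≠ (q : ℂ) →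
      Lu ((q : ℂ) ^ (-s)) χ =
        (1 - (q : ℂ) ^ ((1 : ℂ) - s))⁻¹ *
          ((∑ n ∈ Finset.range (A + 2), sumMonic n χ * (q : ℂ) ^ (-s * (n : ℂ))) -
            (q : ℂ) ^ ((1 : ℂ) - s) *
              ∑ n ∈ Finset.range (A + 1), sumMonic n χ * (q : ℂ) ^ (-s * (n : ℂ))) +
        (1 - (q : ℂ) ^ s)⁻¹ * ω * (q : ℂ) ^ (-(s - 1 / 2) * (g : ℂ)) *
          (zetaq q (2 - s) / zetaq q (s + 1)) *
          ((∑ n ∈ Finset.range (g - A + 1),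
              sumMonic n (fun f => (starRingEnd ℂ) (χ f)) * (q : ℂ) ^ (-(1 - s) * (n : ℂ))) -
            (q : ℂ) ^ s *
              ∑ n ∈ Finset.range (g - A),
                sumMonic n (fun f => (starRingEnd ℂ) (χ f)) *
                  (q : ℂ) ^ (-(1 - s) * (n : ℂ))) := by
  intro A hA s hs1 hs2
  have hq0 : ((q : ℕ) : ℂ) ≠ 0 := Nat.cast_ne_zero.mpr hq.pos.ne'
  have hqR : (0 : ℝ) < (q : ℝ) := by exact_mod_cast hq.pos
  set t : ℂ := (q : ℂ) ^ s with ht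
  set u : ℂ := (q : ℂ) ^ (-s) with hudef
  set sq : ℂ := ((Real.sqrt q : ℝ) : ℂ) with hsqdef
  set v : ℂ := t * (q : ℂ)⁻¹ with hvdef
  have ht0 : t ≠ 0 := by
    rw [ht]; simp [Complex.cpow_eq_zero_iff, hq0]
  have hu_eq : u = t⁻¹ := by rw [hudef, ht, Complex.cpow_neg]
  have hu0 : u ≠ 0 := by rw [hu_eq]; exact inv_ne_zero ht0
  have h1t : (1 : ℂ) - t ≠ 0 := sub_ne_zero.mpr (Ne.symm hs1)
  have hu1 : u ≠ 1 := by
    rw [hu_eq]; intro h; exact hs1 (by rwa [inv_eq_one] at h)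
  have h1u : (1 : ℂ) - u ≠ 0 := sub_ne_zero.mpr (Ne.symm hu1)
  have hy : (q : ℂ) ^ ((1 : ℂ) - s) = (q : ℂ) * u := by
    rw [Complex.cpow_sub _ _ hq0, Complex.cpow_one, hu_eq, ← ht, div_eq_mul_inv]
  have h1y : (1 : ℂ) - (q : ℂ) * u ≠ 0 := by
    rw [hu_eq]; intro h; apply hs2
    field_simp at h; linear_combination h
  have hv : (q : ℂ) ^ (s - 1) = v := by
    rw [Complex.cpow_sub _ _ hq0, Complex.cpow_one, ← ht, hvdef, div_eq_mul_inv]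
  have h1v : (1 : ℂ) - v ≠ 0 := by
    rw [hvdef]; intro h; apply hs2
    field_simp at h; linear_combination -h
  have hsq0 : sq ≠ 0 := by
    rw [hsqdef]
    exact_mod_cast (Real.sqrt_pos.mpr hqR).ne'
  have homega0 : ω ≠ 0 := by
    intro h; rw [h] at habs; simp at habs
  -- power rewrites
  have hpow : ∀ n : ℕ, (q : ℂ) ^ (-s * (n : ℂ)) = u ^ n := by
    intro n
    rw [mul_comm, Complex.cpow_nat_mul, ← hudef]
  have hpowv : ∀ n : ℕ, (q : ℂ) ^ (-(1 - s) * (n : ℂ)) = v ^ n := by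
    intro n
    rw [show -(1 - s) * (n : ℂ) = (n : ℂ) * (s - 1) by ring, Complex.cpow_nat_mul, hv]
  have hW : (q : ℂ) ^ (-(s - 1 / 2) * (g : ℂ)) = (sq * u) ^ g := by
    rw [show -(s - 1 / 2) * (g : ℂ) = (g : ℂ) * (1 / 2 - s) by ring, Complex.cpow_nat_mul]
    congr 1
    rw [Complex.cpow_sub _ _ hq0, ← ht, hu_eq, div_eq_mul_inv]
    congr 1
    rw [hsqdef, Real.sqrt_eq_rpow, Complex.ofReal_cpow hqR.le]
    norm_num
  have hzeta2 : zetaq q (2 - s) = (1 - v)⁻¹ := by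
    rw [zetaq, show (1 : ℂ) - (2 - s) = s - 1 by ring, hv]
  have hzeta1 : zetaq q (s + 1) = (1 - u)⁻¹ := by
    rw [zetaq, show (1 : ℂ) - (s + 1) = -s by ring, ← hudef]
  -- L-functions as finite sums
  have hconj : ∀ n : ℕ, sumMonic n (fun f => (starRingEnd ℂ) (χ f))
      = (starRingEnd ℂ) (sumMonic n χ) := by
    intro n; rw [sumMonic, sumMonic, map_sum]
  have hLu : ∀ w : ℂ, Lu w χ = ∑ n ∈ Finset.range (g + 2), sumMonic n χ * w ^ n := by
    intro w
    rw [Lu]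
    apply tsum_eq_sum
    intro n hn
    rw [hpoly n (by simp [Finset.mem_range] at hn; omega), zero_mul]
  have hLubar : ∀ w : ℂ, Lu w (fun f => (starRingEnd ℂ) (χ f))
      = ∑ n ∈ Finset.range (g + 2), (starRingEnd ℂ) (sumMonic n χ) * w ^ n := by
    intro w
    rw [Lu]
    rw [tsum_congr (fun n => by rw [hconj n])]
    apply tsum_eq_sum
    intro n hn
    rw [hpoly n (by simp [Finset.mem_range] at hn; omega), map_zero, zero_mul]
  have hsum0 : ∑ n ∈ Finset.range (g + 2), sumMonic n χ = 0 := by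
    have h := hvanish
    rw [hLu 1] at h
    simpa using h
  set b : ℕ → ℂ := fun n => ∑ m ∈ Finset.range (n + 1), sumMonic m χ with hbdef
  have hb' : ∀ n, b n = ∑ m ∈ Finset.range (n + 1), sumMonic m χ := fun n => rfl
  have hbg1 : b (g + 1) = 0 := by rw [hb']; exact hsum0
  have hbconj : ∀ n, (starRingEnd ℂ) (b n)
      = ∑ m ∈ Finset.range (n + 1), (starRingEnd ℂ) (sumMonic m χ) := by
    intro n; rw [hb', map_sum]
  have hLfac : ∀ w : ℂ, Lu w χ = (1 - w) * ∑ n ∈ Finset.range (g + 1), b n * w ^ n := by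
    intro w
    rw [hLu w, show g + 2 = (g + 1) + 1 from rfl,
      abel_sum (fun n => sumMonic n χ) b hb' w (g + 1),
      Finset.sum_range_succ (fun n => b n * w ^ n), hbg1]
    ring
  have hLbarfac : ∀ w : ℂ, Lu w (fun f => (starRingEnd ℂ) (χ f))
      = (1 - w) * ∑ n ∈ Finset.range (g + 1), (starRingEnd ℂ) (b n) * w ^ n := by
    intro w
    rw [hLubar w, show g + 2 = (g + 1) + 1 from rfl,
      abel_sum (fun n => (starRingEnd ℂ) (sumMonic n χ)) (fun n => (starRingEnd ℂ) (b n))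
        hbconj w (g + 1),
      Finset.sum_range_succ (fun n => (starRingEnd ℂ) (b n) * w ^ n), hbg1]
    simp
  -- the coefficient functional equation
  have hbFE : ∀ n ≤ g, b n
      = ω * sq ^ g * (q : ℂ) ^ n * ((q : ℂ) ^ g)⁻¹ * (starRingEnd ℂ) (b (g - n)) := by
    apply coeff_ext
    have hsub : ({0, 1, ((q:ℂ))⁻¹} : Set ℂ)ᶜ ⊆ {w : ℂ |
        ∑ n ∈ Finset.range (g+1), b n * w ^ n =
        ∑ n ∈ Finset.range (g+1),
          (fun n => ω * sq ^ g * (q : ℂ) ^ n * ((q : ℂ) ^ g)⁻¹ *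
            (starRingEnd ℂ) (b (g - n))) n * w ^ n} := by
      intro w hw
      simp only [Set.mem_compl_iff, Set.mem_insert_iff, Set.mem_singleton_iff, not_or] at hw
      obtain ⟨hw0, hw1, hwq⟩ := hw
      have hqw0 : (q:ℂ) * w ≠ 0 := mul_ne_zero hq0 hw0
      have hqw1 : (q:ℂ) * w ≠ 1 := by
        intro h; exact hwq (eq_inv_of_mul_eq_one_right h)
      have h1w : (1:ℂ) - w ≠ 0 := sub_ne_zero.mpr (Ne.symm hw1)
      have hiw1 : (1:ℂ) - 1/((q:ℂ)*w) ≠ 0 := by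
        rw [sub_ne_zero]; intro h
        apply hqw1
        field_simp at h
        linear_combination h
      have hFEw := hFE w hw0 hw1 hqw1
      rw [hLfac w, hLbarfac (1/((q:ℂ)*w)), mul_div_cancel_left₀ _ h1w,
        mul_div_cancel_left₀ _ hiw1] at hFEw
      simp only [Set.mem_setOf_eq]
      rw [hFEw, Finset.mul_sum]
      rw [← Finset.sum_range_reflect (fun n => (fun n => ω * sq ^ g * (q : ℂ) ^ n *
        ((q : ℂ) ^ g)⁻¹ * (starRingEnd ℂ) (b (g - n))) n * w ^ n) (g+1)]
      apply Finset.sum_congr rfl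
      intro k hk
      have hk' : k ≤ g := by simp [Finset.mem_range] at hk; omega
      obtain ⟨d, hd⟩ : ∃ d, g = k + d := ⟨g - k, by omega⟩
      simp only []
      rw [show g + 1 - 1 - k = d by omega, show g - d = k by omega, hd]
      field_simp
      have e1 : w ^ k * w⁻¹ ^ k = 1 := by rw [← mul_pow, mul_inv_cancel₀ hw0, one_pow]
      have e2 : (q:ℂ) ^ k * (q:ℂ)⁻¹ ^ k = 1 := by rw [← mul_pow, mul_inv_cancel₀ hq0, one_pow]
      linear_combination (sq ^ k * sq ^ d * w ^ d * (starRingEnd ℂ) (b k) * (q:ℂ) ^ d)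
        * ((q:ℂ) ^ k * (q:ℂ)⁻¹ ^ k) * e1
        + (sq ^ k * sq ^ d * w ^ d * (starRingEnd ℂ) (b k) * (q:ℂ) ^ d) * e2
    exact Set.Infinite.mono hsub
      (Set.Finite.infinite_compl (((Set.finite_singleton _).insert _).insert _))
  obtain ⟨B, hB⟩ : ∃ B, A + B = g := ⟨g - A, by omega⟩
  have htrans : ∀ k, k ≤ g → (ω * (sq * u) ^ g) * ((starRingEnd ℂ) (b k) * v ^ k)
      = b (g - k) * u ^ (g - k) := by
    intro k hk
    obtain ⟨d, hd⟩ : ∃ d, g = k + d := ⟨g - k, by omega⟩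
    have h1 := hbFE (g - k) (by omega)
    rw [show g - (g - k) = k by omega] at h1
    rw [show g - k = d by omega] at h1 ⊢
    rw [h1, hu_eq, hvdef, hd]
    field_simp
    have e1 : t ^ k * t⁻¹ ^ k = 1 := by rw [← mul_pow, mul_inv_cancel₀ ht0, one_pow]
    have e2 : (q:ℂ) ^ k * (q:ℂ)⁻¹ ^ k = 1 := by rw [← mul_pow, mul_inv_cancel₀ hq0, one_pow]
    linear_combination (sq ^ k * sq ^ d * t⁻¹ ^ d * (starRingEnd ℂ) (b k) * (q:ℂ) ^ d)
      * ((q:ℂ) ^ k * (q:ℂ)⁻¹ ^ k) * e1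
      + (sq ^ k * sq ^ d * t⁻¹ ^ d * (starRingEnd ℂ) (b k) * (q:ℂ) ^ d) * e2
  have hQB : (ω * (sq * u) ^ g) * (∑ k ∈ Finset.range (B+1), (starRingEnd ℂ) (b k) * v ^ k)
      = b A * u ^ A + ∑ n ∈ Finset.Ico (A+1) (g+1), b n * u ^ n := by
    rw [Finset.mul_sum]
    rw [Finset.sum_congr rfl (fun k hk => htrans k (by simp [Finset.mem_range] at hk; omega))]
    have e2 : ∑ k ∈ Finset.range (B+1), b (g-k) * u ^ (g-k)
        = ∑ j ∈ Finset.range (B+1), b (A+j) * u ^ (A+j) := by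
      rw [← Finset.sum_range_reflect (fun j => b (A+j) * u ^ (A+j)) (B+1)]
      apply Finset.sum_congr rfl
      intro k hk
      have hk' : k ≤ B := by simp [Finset.mem_range] at hk; omega
      rw [show A + (B+1-1-k) = g - k by omega]
    rw [e2, Finset.sum_range_succ' (fun j => b (A+j) * u ^ (A+j)) B]
    rw [Finset.sum_Ico_eq_sum_range, show g + 1 - (A+1) = B by omega]
    have e3 : ∀ j ∈ Finset.range B, b (A+(j+1)) * u ^ (A+(j+1)) = b (A+1+j) * u ^ (A+1+j) := by
      intro j hj; rw [show A+(j+1) = A+1+j by omega]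
    rw [Finset.sum_congr rfl e3, Nat.add_zero]
    exact add_comm _ _
  have hTb1 : (ω * (sq * u) ^ g) * ((starRingEnd ℂ) (b B) * v ^ (B+1)) = v * (b A * u ^ A) := by
    have h1 := htrans B (by omega)
    rw [show g - B = A by omega] at h1
    calc (ω * (sq * u) ^ g) * ((starRingEnd ℂ) (b B) * v ^ (B+1))
        = v * ((ω * (sq * u) ^ g) * ((starRingEnd ℂ) (b B) * v ^ B)) := by ring
      _ = v * (b A * u ^ A) := by rw [h1]
  have hTa : (ω * (sq * u) ^ g) * ((starRingEnd ℂ) (sumMonic B χ) * v ^ B)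
      = b A * u ^ A - v * (b (A+1) * u ^ (A+1)) := by
    rcases B with _ | C
    · have hAg : A = g := by omega
      have hb0 : b 0 = sumMonic 0 χ := by rw [hb']; simp
      have h1 := htrans 0 (by omega)
      rw [show g - 0 = g by omega] at h1
      rw [← hb0, h1, hAg, hbg1]
      ring
    · have hstep : sumMonic (C+1) χ = b (C+1) - b C := by
        rw [hb', hb', Finset.sum_range_succ]; ring
      have h1 := htrans (C+1) (by omega)
      have h2 := htrans C (by omega)
      rw [show g - (C+1) = A by omega] at h1
      rw [show g - C = A + 1 by omega] at h2
      rw [hstep, map_sub]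
      calc (ω * (sq * u) ^ g) * (((starRingEnd ℂ) (b (C+1)) - (starRingEnd ℂ) (b C)) * v ^ (C+1))
          = (ω * (sq * u) ^ g) * ((starRingEnd ℂ) (b (C+1)) * v ^ (C+1))
            - v * ((ω * (sq * u) ^ g) * ((starRingEnd ℂ) (b C) * v ^ C)) := by ring
        _ = b A * u ^ A - v * (b (A+1) * u ^ (A+1)) := by rw [h1, h2]
  -- rewrite the goal
  rw [hLfac u]
  simp only [hconj, hpow, hpowv]
  rw [hzeta2, hzeta1, hW, hy]
  rw [show g - A = B by omega]
  rw [show A + 2 = (A+1) + 1 from rfl,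
    Finset.sum_range_succ (fun n => sumMonic n χ * u ^ n) (A+1)]
  rw [abel_sum (fun n => sumMonic n χ) b hb' u A]
  have h1d := abel_sum (fun n => (starRingEnd ℂ) (sumMonic n χ))
    (fun n => (starRingEnd ℂ) (b n)) hbconj v B
  have h2d : ∑ n ∈ Finset.range B, (starRingEnd ℂ) (sumMonic n χ) * v ^ n
      = ((1-v) * ∑ n ∈ Finset.range (B+1), (starRingEnd ℂ) (b n) * v ^ n
          + (starRingEnd ℂ) (b B) * v ^ (B+1)) - (starRingEnd ℂ) (sumMonic B χ) * v ^ B := by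
    rw [← h1d, Finset.sum_range_succ]; ring
  rw [h1d, h2d]
  have hsplit : ∑ n ∈ Finset.range (g+1), b n * u ^ n
      = (∑ n ∈ Finset.range (A+1), b n * u ^ n) + ∑ n ∈ Finset.Ico (A+1) (g+1), b n * u ^ n := by
    rw [Finset.range_eq_Ico,
      ← Finset.sum_Ico_consecutive (fun n => b n * u ^ n) (Nat.zero_le (A+1))
        (by omega : A+1 ≤ g+1), ← Finset.range_eq_Ico]
  rw [hsplit]
  have haA1 : sumMonic (A+1) χ = b (A+1) - b A := by
    rw [hb', hb', Finset.sum_range_succ]; ring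
  rw [haA1]
  have hG0 : ω * (sq * u) ^ g ≠ 0 :=
    mul_ne_zero homega0 (pow_ne_zero _ (mul_ne_zero hsq0 hu0))
  have key : (ω * (sq * u) ^ g) *
      (((1-v) * ∑ n ∈ Finset.range (B+1), (starRingEnd ℂ) (b n) * v ^ n
          + (starRingEnd ℂ) (b B) * v ^ (B+1))
        - t * (((1-v) * ∑ n ∈ Finset.range (B+1), (starRingEnd ℂ) (b n) * v ^ n
          + (starRingEnd ℂ) (b B) * v ^ (B+1)) - (starRingEnd ℂ) (sumMonic B χ) * v ^ B))
      = (1-t) * ((1-v) * (b A * u ^ A + ∑ n ∈ Finset.Ico (A+1) (g+1), b n * u ^ n)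
          + v * (b A * u ^ A)) + t * (b A * u ^ A - v * (b (A+1) * u ^ (A+1))) := by
    linear_combination ((1-v)*(1-t)) * hQB + (1-t) * hTb1 + t * hTa
  have hBigD : ((1-v) * ∑ n ∈ Finset.range (B+1), (starRingEnd ℂ) (b n) * v ^ n
          + (starRingEnd ℂ) (b B) * v ^ (B+1))
        - t * (((1-v) * ∑ n ∈ Finset.range (B+1), (starRingEnd ℂ) (b n) * v ^ n
          + (starRingEnd ℂ) (b B) * v ^ (B+1)) - (starRingEnd ℂ) (sumMonic B χ) * v ^ B)
      = (ω * (sq * u) ^ g)⁻¹ *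
        ((1-t) * ((1-v) * (b A * u ^ A + ∑ n ∈ Finset.Ico (A+1) (g+1), b n * u ^ n)
          + v * (b A * u ^ A)) + t * (b A * u ^ A - v * (b (A+1) * u ^ (A+1)))) := by
    rw [← key, inv_mul_cancel_left₀ hG0]
  rw [hBigD]
  have hcancel : ∀ x y : ℂ, (1-t)⁻¹ * ω * (sq * u) ^ g * x * ((ω * (sq * u) ^ g)⁻¹ * y)
      = (1-t)⁻¹ * x * y := by
    intro x y
    field_simp
  rw [hcancel]
  linear_combination final_algebra t u v (q:ℂ)
    (∑ n ∈ Finset.range (A+1), b n * u ^ n) (∑ n ∈ Finset.Ico (A+1) (g+1), b n * u ^ n)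
    (b A) (b (A+1)) (u ^ A) hu_eq hvdef hq0 ht0 h1u h1t h1v h1y
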